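/- For every fixed h > 0, the function B(ε) = e^{ε²h²}·(2ε²h²·cosh(2ε²h²) − sinh(2ε²h²)) / (4ε²h² − sinh(4ε²h²)), defined for ε > 0, tends to −1/4 as ε → 0⁺. -/

import Mathlib

open Filter Topology

private lemma key_limit :
    Tendsto (fun t : ℝ =>
      (2 * t * Real.cosh (2 * t) - Real.sinh (2 * t)) / (4 * t - Real.sinh (4 * t)))
      (𝓝[>] 0) (𝓝 (-1 / 4)) := by
  have hderiv2 : ∀ t : ℝ, HasDerivAt (fun t : ℝ => 2 * t) 2 t := by
    intro t
    simpa using (hasDerivAt_id t).const_mul 2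
  have hderiv4 : ∀ t : ℝ, HasDerivAt (fun t : ℝ => 4 * t) 4 t := by
    intro t
    simpa using (hasDerivAt_id t).const_mul 4
  -- derivatives
  have hf1 : ∀ t : ℝ, HasDerivAt (fun t : ℝ => 2 * t * Real.cosh (2 * t) - Real.sinh (2 * t))
      (4 * t * Real.sinh (2 * t)) t := by
    intro t
    have h1 := ((hderiv2 t).mul ((hderiv2 t).cosh)).sub ((hderiv2 t).sinh)
    exact h1.congr_deriv (by ring)
  have hg1 : ∀ t : ℝ, HasDerivAt (fun t : ℝ => 4 * t - Real.sinh (4 * t))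
      (4 - 4 * Real.cosh (4 * t)) t := by
    intro t
    have h1 := (hderiv4 t).sub ((hderiv4 t).sinh)
    exact h1.congr_deriv (by ring)
  have hf2 : ∀ t : ℝ, HasDerivAt (fun t : ℝ => 4 * t * Real.sinh (2 * t))
      (4 * Real.sinh (2 * t) + 8 * t * Real.cosh (2 * t)) t := by
    intro t
    have h1 := (hderiv4 t).mul ((hderiv2 t).sinh)
    exact h1.congr_deriv (by ring)
  have hg2 : ∀ t : ℝ, HasDerivAt (fun t : ℝ => 4 - 4 * Real.cosh (4 * t))
      (-16 * Real.sinh (4 * t)) t := by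
    intro t
    have h1 := (hasDerivAt_const t (4 : ℝ)).sub (((hderiv4 t).cosh).const_mul 4)
    exact h1.congr_deriv (by ring)
  have hf3 : ∀ t : ℝ, HasDerivAt (fun t : ℝ => 4 * Real.sinh (2 * t) + 8 * t * Real.cosh (2 * t))
      (16 * Real.cosh (2 * t) + 16 * t * Real.sinh (2 * t)) t := by
    intro t
    have h8 : HasDerivAt (fun t : ℝ => 8 * t) 8 t := by
      simpa using (hasDerivAt_id t).const_mul 8
    have h1 := (((hderiv2 t).sinh).const_mul 4).add ((h8.mul ((hderiv2 t).cosh)))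
    exact h1.congr_deriv (by ring)
  have hg3 : ∀ t : ℝ, HasDerivAt (fun t : ℝ => -16 * Real.sinh (4 * t))
      (-64 * Real.cosh (4 * t)) t := by
    intro t
    have h1 := ((hderiv4 t).sinh).const_mul (-16 : ℝ)
    exact h1.congr_deriv (by ring)
  have hpos : ∀ᶠ t : ℝ in 𝓝[>] 0, (0 : ℝ) < t :=
    eventually_mem_nhdsWithin
  -- nonvanishing of derivatives of denominators
  have hg1ne : ∀ᶠ t : ℝ in 𝓝[>] 0, 4 - 4 * Real.cosh (4 * t) ≠ 0 := by
    filter_upwards [hpos] with t ht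
    have : 1 < Real.cosh (4 * t) := Real.one_lt_cosh.2 (by positivity)
    nlinarith
  have hg2ne : ∀ᶠ t : ℝ in 𝓝[>] 0, -16 * Real.sinh (4 * t) ≠ 0 := by
    filter_upwards [hpos] with t ht
    have : 0 < Real.sinh (4 * t) := Real.sinh_pos_iff.2 (by positivity)
    nlinarith
  have hg3ne : ∀ᶠ t : ℝ in 𝓝[>] 0, -64 * Real.cosh (4 * t) ≠ 0 := by
    filter_upwards with t
    have : 0 < Real.cosh (4 * t) := Real.cosh_pos _
    nlinarith
  -- limits to zero
  have hzero : ∀ (f : ℝ → ℝ), Continuous f → f 0 = 0 → Tendsto f (𝓝[>] 0) (𝓝 0) := by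
    intro f hc h0
    exact ((hc.tendsto' 0 0 h0)).mono_left nhdsWithin_le_nhds
  have hf0z : Tendsto (fun t : ℝ => 2 * t * Real.cosh (2 * t) - Real.sinh (2 * t))
      (𝓝[>] 0) (𝓝 0) := by
    apply hzero _ (by fun_prop) (by simp)
  have hg0z : Tendsto (fun t : ℝ => 4 * t - Real.sinh (4 * t)) (𝓝[>] 0) (𝓝 0) := by
    apply hzero _ (by fun_prop) (by simp)
  have hf1z : Tendsto (fun t : ℝ => 4 * t * Real.sinh (2 * t)) (𝓝[>] 0) (𝓝 0) := by
    apply hzero _ (by fun_prop) (by simp)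
  have hg1z : Tendsto (fun t : ℝ => 4 - 4 * Real.cosh (4 * t)) (𝓝[>] 0) (𝓝 0) := by
    apply hzero _ (by fun_prop) (by simp)
  have hf2z : Tendsto (fun t : ℝ => 4 * Real.sinh (2 * t) + 8 * t * Real.cosh (2 * t))
      (𝓝[>] 0) (𝓝 0) := by
    apply hzero _ (by fun_prop) (by simp)
  have hg2z : Tendsto (fun t : ℝ => -16 * Real.sinh (4 * t)) (𝓝[>] 0) (𝓝 0) := by
    apply hzero _ (by fun_prop) (by simp)
  -- final limit by fun_prop
  have hlast : Tendsto (fun t : ℝ =>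
      (16 * Real.cosh (2 * t) + 16 * t * Real.sinh (2 * t)) / (-64 * Real.cosh (4 * t)))
      (𝓝[>] 0) (𝓝 (-1 / 4)) := by
    have hc : Continuous (fun t : ℝ =>
        (16 * Real.cosh (2 * t) + 16 * t * Real.sinh (2 * t)) / (-64 * Real.cosh (4 * t))) := by
      apply Continuous.div (by fun_prop) (by fun_prop)
      intro t
      have : 0 < Real.cosh (4 * t) := Real.cosh_pos _
      nlinarith
    have := hc.tendsto' 0 (-1 / 4) (by norm_num)
    exact this.mono_left nhdsWithin_le_nhds
  have step3 := HasDerivAt.lhopital_zero_nhdsGT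
    (Eventually.of_forall hf3) (Eventually.of_forall hg3) hg3ne hf2z hg2z hlast
  have step2 := HasDerivAt.lhopital_zero_nhdsGT
    (Eventually.of_forall hf2) (Eventually.of_forall hg2) hg2ne hf1z hg1z step3
  exact HasDerivAt.lhopital_zero_nhdsGT
    (Eventually.of_forall hf1) (Eventually.of_forall hg1) hg1ne hf0z hg0z step2

/-- In the flat limit ε → 0⁺, the fourth-order Gaussian RBF-HFD weight
`B(ε)` for derivative values converges to the compact FD weight `-1/4`. -/
theorem gaussian_rbf_hfd4_beta_flat_limit (h : ℝ) (hh : 0 < h) :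
    Tendsto (fun ε : ℝ =>
      Real.exp (ε ^ 2 * h ^ 2) *
        (2 * ε ^ 2 * h ^ 2 * Real.cosh (2 * ε ^ 2 * h ^ 2) - Real.sinh (2 * ε ^ 2 * h ^ 2)) /
        (4 * ε ^ 2 * h ^ 2 - Real.sinh (4 * ε ^ 2 * h ^ 2)))
      (𝓝[>] 0) (𝓝 (-1 / 4)) := by
  have hsub : Tendsto (fun ε : ℝ => ε ^ 2 * h ^ 2) (𝓝[>] 0) (𝓝[>] 0) := by
    rw [tendsto_nhdsWithin_iff]
    constructor
    · have : Continuous (fun ε : ℝ => ε ^ 2 * h ^ 2) := by fun_prop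
      simpa using (this.tendsto' 0 0 (by simp)).mono_left nhdsWithin_le_nhds
    · filter_upwards [eventually_mem_nhdsWithin] with ε (hε : 0 < ε)
      exact mul_pos (pow_pos hε 2) (pow_pos hh 2)
  have hexp : Tendsto (fun ε : ℝ => Real.exp (ε ^ 2 * h ^ 2)) (𝓝[>] 0) (𝓝 1) := by
    have hc : Continuous fun ε : ℝ => Real.exp (ε ^ 2 * h ^ 2) := by fun_prop
    exact (hc.tendsto' 0 1 (by simp)).mono_left nhdsWithin_le_nhds
  have hmain := key_limit.comp hsub
  have := hexp.mul hmain
  rw [one_mul] at this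
  refine this.congr fun ε => ?_
  simp only [Function.comp]
  ring
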